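/- Let U ⊂ ℝᵐ be open and M ⊂ U a properly embedded C¹ submanifold of codimension at least 1. Let f : U \ M → ℝⁿ be C¹ and suppose that f and each of its first-order partial derivatives extend continuously to U. Then the continuous extension of f to U is of class C¹, and its partial derivatives are the continuous extensions of the partial derivatives of f. -/

import Mathlib

open Set Filter Metric
open scoped Topology

/-- A continuous function on an open set which is differentiable off a hyperplane, with
derivative converging at a point of the hyperplane, is differentiable at that point. -/
lemma key_hyperplane {m n : ℕ} {F : (Fin m → ℝ) → (Fin n → ℝ)} {O : Set (Fin m → ℝ)}
    {y₀ : Fin m → ℝ} (i₀ : Fin m) (hO : IsOpen O) (hy₀ : y₀ ∈ O)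
    (hcont : ContinuousOn F O)
    (hdiff : ∀ y ∈ O, y i₀ ≠ 0 → DifferentiableAt ℝ F y)
    {L : (Fin m → ℝ) →L[ℝ] (Fin n → ℝ)}
    (htend : Tendsto (fderiv ℝ F) (𝓝[O ∩ {y | y i₀ ≠ 0}] y₀) (𝓝 L)) :
    HasFDerivAt F L y₀ := by
  obtain ⟨r, hr, hrO⟩ : ∃ r > 0, closedBall y₀ r ⊆ O := by
    rcases Metric.isOpen_iff.1 hO y₀ hy₀ with ⟨ε, hε, hεO⟩
    exact ⟨ε/2, by positivity, (closedBall_subset_ball (by linarith)).trans hεO⟩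
  have hhalf : ∀ c : ℝ, c ≠ 0 → HasFDerivWithinAt F L
      (closure (ball y₀ r ∩ {y | 0 < c * y i₀})) y₀ := by
    intro c hc
    set s : Set (Fin m → ℝ) := ball y₀ r ∩ {y | 0 < c * y i₀} with hs_def
    have hsO : s ⊆ O ∩ {y | y i₀ ≠ 0} := by
      rintro y ⟨hy₁, hy₂⟩
      refine ⟨hrO (ball_subset_closedBall hy₁), fun h0 => ?_⟩
      simp only [mem_setOf_eq, h0, mul_zero] at hy₂
      exact lt_irrefl 0 hy₂
    have hlin : IsLinearMap ℝ (fun y : Fin m → ℝ => c * y i₀) :=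
      ⟨fun y z => by simp [mul_add], fun a y => by simp [Pi.smul_apply]; ring⟩
    have hconv : Convex ℝ s := (convex_ball y₀ r).inter (convex_halfSpace_gt hlin 0)
    have hopen : IsOpen s := isOpen_ball.inter
      (isOpen_Ioi.preimage (by continuity : Continuous fun y : Fin m → ℝ => c * y i₀))
    refine hasFDerivWithinAt_closure_of_tendsto_fderiv ?_ hconv hopen ?_ ?_
    · exact fun y hy => ((hdiff y (hsO hy).1 (hsO hy).2)).differentiableWithinAt
    · intro y hy
      have hyO : y ∈ O := hrO (closure_minimal (inter_subset_left.trans ball_subset_closedBall)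
        Metric.isClosed_closedBall hy)
      exact (hcont.continuousWithinAt hyO).mono (hsO.trans inter_subset_left)
    · exact htend.mono_left (nhdsWithin_mono _ hsO)
  have hP := hhalf 1 one_ne_zero
  have hN := hhalf (-1) (by norm_num)
  have hcover : ball y₀ r ⊆
      closure (ball y₀ r ∩ {y | 0 < (1:ℝ) * y i₀}) ∪
      closure (ball y₀ r ∩ {y | 0 < (-1:ℝ) * y i₀}) := by
    intro y hy
    rcases lt_trichotomy (y i₀) 0 with h | h | h
    · exact Or.inr (subset_closure ⟨hy, by simpa using h⟩)
    · left
      have htendy : Tendsto (fun t : ℝ => y + t • (Pi.single i₀ 1 : Fin m → ℝ)) (𝓝[>] 0)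
          (𝓝 y) := by
        have : Tendsto (fun t : ℝ => y + t • (Pi.single i₀ 1 : Fin m → ℝ)) (𝓝 0) (𝓝 y) := by
          have : Continuous fun t : ℝ => y + t • (Pi.single i₀ 1 : Fin m → ℝ) := by continuity
          simpa using this.tendsto 0
        exact this.mono_left nhdsWithin_le_nhds
      refine mem_closure_of_tendsto htendy ?_
      have h1 : ∀ᶠ t : ℝ in 𝓝[>] 0, y + t • (Pi.single i₀ 1 : Fin m → ℝ) ∈ ball y₀ r :=
        htendy (isOpen_ball.mem_nhds hy)
      filter_upwards [h1, self_mem_nhdsWithin] with t ht ht0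
      refine ⟨ht, ?_⟩
      simp only [mem_setOf_eq, one_mul, Pi.add_apply, Pi.smul_apply, Pi.single_eq_same,
        smul_eq_mul, mul_one, h, zero_add]
      exact ht0
    · exact Or.inl (subset_closure ⟨hy, by simpa using h⟩)
  exact ((hP.union hN).mono hcover).hasFDerivAt (ball_mem_nhds y₀ hr)

/-- `M` is a properly embedded `C¹` submanifold of codimension at least `1` of the open set
`U ⊆ ℝᵐ`: `M` is closed in `U` and around each of its points there is a `C¹` straightening
chart `φ` (a `C¹` diffeomorphism onto an open set) taking `M` to the vanishing locus of a
nonempty set `s` of coordinates. -/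
def IsProperlyEmbeddedC1Submanifold (m : ℕ) (U M : Set (Fin m → ℝ)) : Prop :=
  M ⊆ U ∧ IsClosed ((↑) ⁻¹' M : Set U) ∧
  ∀ p ∈ M, ∃ (V : Set (Fin m → ℝ)) (φ ψ : (Fin m → ℝ) → (Fin m → ℝ)),
    p ∈ V ∧ IsOpen V ∧ V ⊆ U ∧
    ContDiffOn ℝ 1 φ V ∧ IsOpen (φ '' V) ∧ ContDiffOn ℝ 1 ψ (φ '' V) ∧
    (∀ q ∈ V, ψ (φ q) = q) ∧
    ∃ s : Set (Fin m), s.Nonempty ∧ M ∩ V = {q ∈ V | ∀ i ∈ s, φ q i = 0}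

/-- let `U ⊆ ℝᵐ` be open and `M ⊆ U` a properly embedded `C¹` submanifold of
codimension `≥ 1`.  If `f` is `C¹` on `U \ M` and both `f` and its derivative extend
continuously to `U` (as `f̄` and `g`), then `f̄` is `C¹` on `U` with derivative `g`. -/
theorem stmt4 (m n : ℕ) (U M : Set (Fin m → ℝ)) (hU : IsOpen U)
    (hM : IsProperlyEmbeddedC1Submanifold m U M)
    (f fbar : (Fin m → ℝ) → (Fin n → ℝ))
    (hf : ContDiffOn ℝ 1 f (U \ M))
    (g : (Fin m → ℝ) → ((Fin m → ℝ) →L[ℝ] (Fin n → ℝ)))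
    (hfbar_cont : ContinuousOn fbar U) (hfbar_eq : EqOn fbar f (U \ M))
    (hg_cont : ContinuousOn g U)
    (hg_eq : ∀ x ∈ U \ M, g x = fderivWithin ℝ f (U \ M) x) :
    ContDiffOn ℝ 1 fbar U ∧ ∀ x ∈ U, fderivWithin ℝ fbar U x = g x := by
  obtain ⟨hMU, hMclosed, hchart⟩ := hM
  -- `U \ M` is open
  have hUM : IsOpen (U \ M) := by
    rw [isClosed_induced_iff] at hMclosed
    obtain ⟨C, hC, hCM⟩ := hMclosed
    have hiff : ∀ x ∈ U, (x ∈ C ↔ x ∈ M) := by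
      intro x hxU
      have := Set.ext_iff.1 hCM ⟨x, hxU⟩
      simpa using this
    have : U \ M = U ∩ Cᶜ := by
      ext x
      constructor
      · rintro ⟨hxU, hxM⟩
        exact ⟨hxU, fun hxC => hxM ((hiff x hxU).1 hxC)⟩
      · rintro ⟨hxU, hxC⟩
        exact ⟨hxU, fun hxM => hxC ((hiff x hxU).2 hxM)⟩
    rw [this]
    exact hU.inter hC.isOpen_compl
  -- derivative of `f` (hence `fbar`) off `M`
  have hkey : ∀ x ∈ U \ M, HasFDerivAt f (g x) x := by
    intro x hx
    have hd : DifferentiableAt ℝ f x :=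
      (hf.differentiableOn one_ne_zero).differentiableAt (hUM.mem_nhds hx)
    have hgx : g x = fderiv ℝ f x := by
      rw [hg_eq x hx, fderivWithin_of_isOpen hUM hx]
    rw [hgx]
    exact hd.hasFDerivAt
  have hkey' : ∀ x ∈ U \ M, HasFDerivAt fbar (g x) x := fun x hx =>
    (hkey x hx).congr_of_eventuallyEq
      (Filter.eventuallyEq_of_mem (hUM.mem_nhds hx) hfbar_eq)
  -- derivative of `fbar` everywhere on `U`
  have hder : ∀ p ∈ U, HasFDerivAt fbar (g p) p := by
    intro p hpU
    by_cases hpM : p ∈ M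
    swap
    · exact hkey' p ⟨hpU, hpM⟩
    obtain ⟨V, φ, ψ, hpV, hVopen, hVU, hφ, hOopen, hψ, hψφ, s, hs_ne, hMV⟩ := hchart p hpM
    obtain ⟨i₀, hi₀⟩ := hs_ne
    set O := φ '' V with hO_def
    set F := fbar ∘ ψ with hF_def
    have hy₀O : φ p ∈ O := mem_image_of_mem φ hpV
    have hψV : ∀ y ∈ O, ψ y ∈ V ∧ φ (ψ y) = y := by
      rintro y ⟨q, hq, rfl⟩
      rw [hψφ q hq]
      exact ⟨hq, rfl⟩
    have hψU : MapsTo ψ O U := fun y hy => hVU (hψV y hy).1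
    have hψcont : ContinuousOn ψ O := hψ.continuousOn
    have hFcont : ContinuousOn F O := hfbar_cont.comp hψcont hψU
    have hψdiff : ∀ y ∈ O, HasFDerivAt ψ (fderiv ℝ ψ y) y := fun y hy =>
      ((hψ.differentiableOn one_ne_zero).differentiableAt (hOopen.mem_nhds hy)).hasFDerivAt
    have hgood : ∀ y ∈ O, y i₀ ≠ 0 → ψ y ∈ U \ M := by
      intro y hy hne
      refine ⟨hψU hy, fun hmem => hne ?_⟩
      have h1 : ψ y ∈ M ∩ V := ⟨hmem, (hψV y hy).1⟩
      rw [hMV] at h1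
      have h2 := h1.2 i₀ hi₀
      rwa [(hψV y hy).2] at h2
    have hFder : ∀ y ∈ O, y i₀ ≠ 0 →
        HasFDerivAt F ((g (ψ y)).comp (fderiv ℝ ψ y)) y := by
      intro y hy hne
      exact (hkey' (ψ y) (hgood y hy hne)).comp y (hψdiff y hy)
    have hFdiff : ∀ y ∈ O, y i₀ ≠ 0 → DifferentiableAt ℝ F y :=
      fun y hy hne => (hFder y hy hne).differentiableAt
    have hGcont : ContinuousOn (fun y => (g (ψ y)).comp (fderiv ℝ ψ y)) O :=
      (hg_cont.comp hψcont hψU).clm_comp (hψ.continuousOn_fderiv_of_isOpen hOopen le_rfl)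
    have hψφp : ψ (φ p) = p := hψφ p hpV
    set L := (g p).comp (fderiv ℝ ψ (φ p)) with hL_def
    have htend : Tendsto (fderiv ℝ F) (𝓝[O ∩ {y | y i₀ ≠ 0}] (φ p)) (𝓝 L) := by
      have h0 : Tendsto (fun y => (g (ψ y)).comp (fderiv ℝ ψ y)) (𝓝[O] (φ p))
          (𝓝 ((g (ψ (φ p))).comp (fderiv ℝ ψ (φ p)))) :=
        hGcont.continuousWithinAt hy₀O
      rw [hψφp] at h0
      have h1 : Tendsto (fun y => (g (ψ y)).comp (fderiv ℝ ψ y))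
          (𝓝[O ∩ {y | y i₀ ≠ 0}] (φ p)) (𝓝 L) :=
        h0.mono_left (nhdsWithin_mono _ inter_subset_left)
      refine h1.congr' ?_
      exact Filter.eventually_of_mem self_mem_nhdsWithin
        fun y hy => ((hFder y hy.1 hy.2).fderiv).symm
    have hFat : HasFDerivAt F L (φ p) := key_hyperplane i₀ hOopen hy₀O hFcont hFdiff htend
    have hφder : HasFDerivAt φ (fderiv ℝ φ p) p :=
      ((hφ.differentiableOn one_ne_zero).differentiableAt (hVopen.mem_nhds hpV)).hasFDerivAt
    have hcomp : HasFDerivAt (F ∘ φ) (L.comp (fderiv ℝ φ p)) p := hFat.comp p hφder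
    have heq : fbar =ᶠ[𝓝 p] F ∘ φ := by
      filter_upwards [hVopen.mem_nhds hpV] with q hq
      simp [hF_def, Function.comp, hψφ q hq]
    have hfbar_der : HasFDerivAt fbar (L.comp (fderiv ℝ φ p)) p :=
      hcomp.congr_of_eventuallyEq heq
    have hinv : (fderiv ℝ ψ (φ p)).comp (fderiv ℝ φ p) = ContinuousLinearMap.id ℝ _ := by
      have hcomp2 : HasFDerivAt (ψ ∘ φ) ((fderiv ℝ ψ (φ p)).comp (fderiv ℝ φ p)) p :=
        (hψdiff (φ p) hy₀O).comp p hφder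
      have hidder : HasFDerivAt (id : (Fin m → ℝ) → (Fin m → ℝ))
          ((fderiv ℝ ψ (φ p)).comp (fderiv ℝ φ p)) p := by
        refine hcomp2.congr_of_eventuallyEq ?_
        filter_upwards [hVopen.mem_nhds hpV] with q hq
        simp [Function.comp, hψφ q hq]
      exact hidder.unique (hasFDerivAt_id p)
    have hLφ : L.comp (fderiv ℝ φ p) = g p := by
      rw [hL_def, ContinuousLinearMap.comp_assoc, hinv, ContinuousLinearMap.comp_id]
    rwa [hLφ] at hfbar_der
  constructor
  · have h := (contDiffOn_succ_iff_fderiv_of_isOpen (𝕜 := ℝ) (n := 0) hU (f := fbar)).2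
      ⟨fun x hx => ((hder x hx).differentiableAt).differentiableWithinAt,
       by simp,
       by rw [contDiffOn_zero]
          exact hg_cont.congr fun x hx => (hder x hx).fderiv⟩
    simpa using h
  · intro x hx
    exact ((hder x hx).hasFDerivWithinAt).fderivWithin (hU.uniqueDiffOn x hx)
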